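/- For all n ≥ 2, the prefix reversal diameter of fully binary strings of length n equals n − 1; that is, d(s,t) ≤ n − 1 for all compatible fully binary strings s, t of length n, and there exist compatible fully binary strings s, t of length n with d(s,t) = n − 1. -/

import Mathlib

/-- Prefix reversal (flip) of the first `i` symbols of `s`. -/
def pflip (i : ℕ) (s : List ℕ) : List ℕ := (s.take i).reverse ++ s.drop i

/-- One flip step: `t` is obtained from `s` by some flip `f^(i)` with `1 ≤ i ≤ |s|`. -/
def FlipStep (s t : List ℕ) : Prop := ∃ i, 1 ≤ i ∧ i ≤ s.length ∧ t = pflip i s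

/-- `ReachIn m s t`: `t` can be obtained from `s` by exactly `m` flips. -/
def ReachIn : ℕ → List ℕ → List ℕ → Prop
  | 0 => fun s t => s = t
  | (m+1) => fun s t => ∃ u, FlipStep s u ∧ ReachIn m u t

/-- Flip distance: minimum number of flips transforming `s` into `t`. -/
noncomputable def flipDist (s t : List ℕ) : ℕ := sInf {m | ReachIn m s t}

/-- Two strings are compatible if every symbol occurs equally often in both. -/
def Compatible (s t : List ℕ) : Prop := ∀ a, s.count a = t.count a

/-- A string is fully `k`-ary if the set of symbols occurring in it is exactly `{0,…,k-1}`. -/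
def FullyKary (k : ℕ) (s : List ℕ) : Prop := ∀ a, a ∈ s ↔ a < k

/-- A string is normalized if no two adjacent symbols are equal. -/
def Normalized (s : List ℕ) : Prop := s.Chain' (· ≠ ·)

/-- A string is grouped if the occurrences of each symbol are consecutive. -/
def Grouped (s : List ℕ) : Prop :=
  ∀ i j l : Fin s.length, i < j → j < l → s.get i = s.get l → s.get j = s.get i

/-- Flip grouping distance: minimum number of flips transforming `s` into some grouped string. -/
noncomputable def groupDist (s : List ℕ) : ℕ := sInf {m | ∃ t, Grouped t ∧ ReachIn m s t}

/-- Flip sorting distance: flip distance from `s` to its non-descending rearrangement `I(s)`. -/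
noncomputable def sortDist (s : List ℕ) : ℕ := flipDist s (s.insertionSort (· ≤ ·))

/-- `rep w m` is the concatenation of `m` copies of the string `w`. -/
def rep (w : List ℕ) (m : ℕ) : List ℕ := (List.replicate m w).flatten


def jn (x y : List ℕ) : ℕ := match x.getLast?, y.head? with
  | some a, some b => if a = b then 1 else 0
  | _, _ => 0

def eqAdj : List ℕ → ℕ
  | [] => 0
  | [_] => 0
  | a :: b :: l => (if a = b then 1 else 0) + eqAdj (b :: l)

lemma jn_le_one (x y : List ℕ) : jn x y ≤ 1 := by
  unfold jn
  rcases x.getLast? with _ | a <;> rcases y.head? with _ | b <;> simp <;> split <;> simp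

lemma jn_some {x y : List ℕ} {a b : ℕ} (hx : x.getLast? = some a) (hy : y.head? = some b) :
    jn x y = if a = b then 1 else 0 := by
  unfold jn; rw [hx, hy]

lemma jn_singleton (x : List ℕ) (a : ℕ) :
    jn x [a] = if x.getLast? = some a then 1 else 0 := by
  unfold jn
  rcases h : x.getLast? with _ | b
  · simp
  · simp

lemma eqAdj_cons (a : ℕ) (l : List ℕ) :
    eqAdj (a :: l) = (if l.head? = some a then 1 else 0) + eqAdj l := by
  cases l with
  | nil => simp [eqAdj]
  | cons b l =>
    show (if a = b then 1 else 0) + eqAdj (b :: l) = _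
    by_cases h : a = b
    · subst h; simp
    · rw [if_neg h, if_neg (by simp [Ne.symm h])]

lemma jn_cons (a : ℕ) (x y : List ℕ) (hx : x ≠ []) : jn (a :: x) y = jn x y := by
  cases x with
  | nil => exact absurd rfl hx
  | cons b x' => unfold jn; rw [List.getLast?_cons_cons]

lemma eqAdj_append (x y : List ℕ) : eqAdj (x ++ y) = eqAdj x + eqAdj y + jn x y := by
  induction x with
  | nil => simp [jn, eqAdj]
  | cons a x IH =>
    cases x with
    | nil =>
      simp only [List.nil_append, List.singleton_append, eqAdj_cons]
      have h1 : eqAdj [a] = 0 := rfl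
      have h2 : jn [a] y = if y.head? = some a then 1 else 0 := by
        unfold jn
        rcases h : y.head? with _ | b
        · simp
        · simp [eq_comm]
      rw [h2]
      generalize (if y.head? = some a then 1 else 0) = k
      simp [eqAdj]
      omega
    | cons b x' =>
      have h1 : (a :: b :: x') ++ y = a :: ((b :: x') ++ y) := by simp
      rw [h1]
      show (if a = b then 1 else 0) + eqAdj ((b :: x') ++ y) = _
      rw [IH]
      show _ = (if a = b then 1 else 0) + eqAdj (b :: x') + eqAdj y + jn (a :: b :: x') y
      rw [jn_cons a (b :: x') y (by simp)]
      ring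

lemma eqAdj_reverse (l : List ℕ) : eqAdj l.reverse = eqAdj l := by
  induction l with
  | nil => rfl
  | cons a l IH =>
    have h0 : (a :: l).reverse = l.reverse ++ [a] := by simp
    rw [h0, eqAdj_append, IH, eqAdj_cons a l, jn_singleton, List.getLast?_reverse]
    have h1 : eqAdj [a] = 0 := rfl
    rw [h1]; ring

lemma pflip_perm (i : ℕ) (s : List ℕ) : (pflip i s).Perm s := by
  unfold pflip
  calc ((s.take i).reverse ++ s.drop i).Perm (s.take i ++ s.drop i) :=
        (List.reverse_perm _).append_right _
    _ = s := by rw [List.take_append_drop]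

lemma flipStep_perm {s t : List ℕ} (h : FlipStep s t) : t.Perm s := by
  obtain ⟨i, _, _, rfl⟩ := h; exact pflip_perm i s

lemma pflip_pflip (i : ℕ) (s : List ℕ) (hi : i ≤ s.length) : pflip i (pflip i s) = s := by
  have hA : (s.take i).reverse.length = i := by
    rw [List.length_reverse, List.length_take]; omega
  show (List.take i ((s.take i).reverse ++ s.drop i)).reverse ++
      List.drop i ((s.take i).reverse ++ s.drop i) = s
  rw [List.take_append_of_le_length (le_of_eq hA.symm),
      List.drop_append_of_le_length (le_of_eq hA.symm),
      List.take_of_length_le (le_of_eq hA), List.drop_of_length_le (le_of_eq hA),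
      List.reverse_reverse, List.nil_append, List.take_append_drop]

lemma flipStep_symm {s t : List ℕ} (h : FlipStep s t) : FlipStep t s := by
  obtain ⟨i, h1, h2, rfl⟩ := h
  exact ⟨i, h1, by rw [(pflip_perm i s).length_eq]; exact h2,
    (pflip_pflip i s h2).symm⟩

lemma reach_one {s t : List ℕ} (h : FlipStep s t) : ReachIn 1 s t := ⟨t, h, rfl⟩

lemma reach_trans {m k : ℕ} {s u t : List ℕ} (h1 : ReachIn m s u) (h2 : ReachIn k u t) :
    ReachIn (m + k) s t := by
  induction m generalizing s with
  | zero => cases h1; simpa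
  | succ m IH =>
    obtain ⟨v, hv, hr⟩ := h1
    have he : m + 1 + k = (m + k) + 1 := by omega
    rw [he]
    exact ⟨v, hv, IH hr⟩

lemma reach_symm {m : ℕ} {s t : List ℕ} (h : ReachIn m s t) : ReachIn m t s := by
  induction m generalizing s with
  | zero => cases h; rfl
  | succ m IH =>
    obtain ⟨v, hv, hr⟩ := h
    exact reach_trans (IH hr) (reach_one (flipStep_symm hv))

lemma reach_perm {m : ℕ} {s t : List ℕ} (h : ReachIn m s t) : t.Perm s := by
  induction m generalizing s with
  | zero => cases h; rfl
  | succ m IH =>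
    obtain ⟨v, hv, hr⟩ := h
    exact (IH hr).trans (flipStep_perm hv)

lemma pflip_append {i : ℕ} {p r : List ℕ} (h : i ≤ p.length) :
    pflip i (p ++ r) = pflip i p ++ r := by
  unfold pflip
  rw [List.take_append_of_le_length h, List.drop_append_of_le_length h, List.append_assoc]

lemma reach_append {m : ℕ} {p q : List ℕ} (r : List ℕ) (h : ReachIn m p q) :
    ReachIn m (p ++ r) (q ++ r) := by
  induction m generalizing p with
  | zero => cases h; rfl
  | succ m IH =>
    obtain ⟨v, ⟨i, hi1, hi2, rfl⟩, hr⟩ := h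
    exact ⟨pflip i p ++ r, ⟨i, hi1, by simp; omega, (pflip_append hi2).symm⟩, IH hr⟩

lemma pflip_all (s : List ℕ) : pflip s.length s = s.reverse := by
  simp [pflip]

lemma pflip_left (p v : List ℕ) : pflip p.length (p ++ v) = p.reverse ++ v := by
  unfold pflip; rw [List.take_left, List.drop_left]

lemma move2 {u r v : List ℕ} (hr : r ≠ []) :
    ReachIn 2 (u ++ r ++ v) (v.reverse ++ (u ++ r)) := by
  have hlen1 : 1 ≤ (u ++ r).length := by
    rcases r with _ | ⟨a, r⟩
    · exact absurd rfl hr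
    · simp; omega
  have step1 : FlipStep (u ++ r ++ v) ((u ++ r).reverse ++ v) :=
    ⟨(u ++ r).length, hlen1, by simp, (pflip_left _ _).symm⟩
  have step2 : FlipStep ((u ++ r).reverse ++ v) (v.reverse ++ (u ++ r)) := by
    refine ⟨((u ++ r).reverse ++ v).length, by simp at hlen1 ⊢; omega, le_rfl, ?_⟩
    rw [pflip_all]; simp
  exact reach_trans (reach_one step1) (reach_one step2)

-- Step lemma: a flip increases eqAdj by at most 1, and if it increases
-- by exactly 1 then the head symbol changes.
lemma flip_eqAdj {s t : List ℕ} (h : FlipStep s t) :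
    eqAdj t ≤ eqAdj s + 1 ∧
    (eqAdj t = eqAdj s + 1 →
      ∃ x y, s.head? = some x ∧ t.head? = some y ∧ x ≠ y) := by
  obtain ⟨i, hi1, hi2, rfl⟩ := h
  set A := s.take i with hA
  set B := s.drop i with hB
  have hAlen : A.length = i := by rw [hA, List.length_take]; omega
  have hAne : A ≠ [] := by
    intro h; rw [h] at hAlen; simp at hAlen; omega
  have hs : s = A ++ B := (List.take_append_drop i s).symm
  have h1 : eqAdj s = eqAdj A + eqAdj B + jn A B := by
    conv_lhs => rw [hs]
    exact eqAdj_append A B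
  have h2 : eqAdj (pflip i s) = eqAdj A + eqAdj B + jn A.reverse B := by
    show eqAdj (A.reverse ++ B) = _
    rw [eqAdj_append, eqAdj_reverse]
  constructor
  · have := jn_le_one A.reverse B
    have := jn_le_one A B
    omega
  · intro heq
    have hj1 : jn A.reverse B = 1 := by
      have := jn_le_one A.reverse B
      have := jn_le_one A B
      omega
    have hj0 : jn A B = 0 := by
      have := jn_le_one A.reverse B
      omega
    -- from hj1 : A.head? = some a, B.head? = some a
    obtain ⟨a, ha⟩ : ∃ a, A.head? = some a := by
      cases hh : A.head? with
      | none => exact absurd (List.head?_eq_none_iff.mp hh) hAne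
      | some a => exact ⟨a, rfl⟩
    obtain ⟨g, hg⟩ : ∃ g, A.getLast? = some g := by
      cases hh : A.getLast? with
      | none => exact absurd (List.getLast?_eq_none_iff.mp hh) hAne
      | some g => exact ⟨g, rfl⟩
    have hrev : A.reverse.getLast? = some a := by rw [List.getLast?_reverse]; exact ha
    obtain ⟨b, hb⟩ : ∃ b, B.head? = some b := by
      cases hh : B.head? with
      | none =>
        exfalso
        have h0 : jn A.reverse B = 0 := by unfold jn; rw [hrev, hh]
        omega
      | some b => exact ⟨b, rfl⟩
    have hab : a = b := by
      rw [jn_some hrev hb] at hj1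
      by_contra hne; rw [if_neg hne] at hj1; exact absurd hj1 (by norm_num)
    have hgb : g ≠ b := by
      intro hgb
      rw [jn_some hg hb, if_pos hgb] at hj0
      exact absurd hj0 (by norm_num)
    refine ⟨a, g, ?_, ?_, ?_⟩
    · rw [hs, List.head?_append, ha]; rfl
    · show ((A.reverse) ++ B).head? = some g
      rw [List.head?_append, List.head?_reverse, hg]; rfl
    · rw [hab]; exact fun h => hgb h.symm
  
lemma jn_none_right {x : List ℕ} : jn x [] = 0 := by
  unfold jn
  rcases x.getLast? with _ | a <;> rfl

-- special case B = [] excluded above? (jn_some with none handled) fine.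

lemma binary_flip {s t : List ℕ} (h : FlipStep s t) (hb : ∀ a ∈ s, a < 2) :
    ∀ a ∈ t, a < 2 := fun a ha => hb a ((flipStep_perm h).mem_iff.mp ha)

lemma lower_main (t : List ℕ) :
    ∀ m u, (∀ a ∈ u, a < 2) → ReachIn m u t →
      eqAdj t ≤ eqAdj u + m ∧
      (eqAdj t = eqAdj u + m → ∀ x, u.head? = some x → t.head? = some ((x + m) % 2)) := by
  intro m
  induction m with
  | zero =>
    intro u hb h
    cases h
    refine ⟨le_refl _, fun _ x hx => ?_⟩
    have hx2 : x < 2 := hb x (List.mem_of_mem_head? hx)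
    rw [hx]
    congr 1
    omega
  | succ m IH =>
    intro u hb h
    obtain ⟨v, hv, hr⟩ := h
    have hbv := binary_flip hv hb
    obtain ⟨ih1, ih2⟩ := IH v hbv hr
    obtain ⟨st1, st2⟩ := flip_eqAdj hv
    refine ⟨by omega, fun heq x hx => ?_⟩
    have hev : eqAdj v = eqAdj u + 1 := by omega
    have het : eqAdj t = eqAdj v + m := by omega
    obtain ⟨x', y', hx', hy', hxy⟩ := st2 hev
    have hxx : x = x' := by rw [hx'] at hx; exact (Option.some_inj.mp hx).symm
    have := ih2 het y' hy'
    rw [this]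
    congr 1
    have hx2 : x' < 2 := hb x' (List.mem_of_mem_head? hx')
    have hy2 : y' < 2 := hbv y' (List.mem_of_mem_head? hy')
    subst hxx
    omega

def altS : ℕ → List ℕ
  | 0 => []
  | (k+1) => (k % 2) :: altS k

def grpT (n : ℕ) : List ℕ := List.replicate (n - n/2) 0 ++ List.replicate (n/2) 1

lemma altS_length (k : ℕ) : (altS k).length = k := by
  induction k with
  | zero => rfl
  | succ k IH => simp [altS, IH]

lemma altS_count (k : ℕ) :
    (altS k).count 0 = (k+1)/2 ∧ (altS k).count 1 = k/2 ∧
    ∀ a, 2 ≤ a → (altS k).count a = 0 := by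
  induction k with
  | zero => exact ⟨rfl, rfl, fun a _ => rfl⟩
  | succ k IH =>
    obtain ⟨h0, h1, h2⟩ := IH
    refine ⟨?_, ?_, fun a ha => ?_⟩
    · show List.count 0 ((k % 2) :: altS k) = _
      rw [List.count_cons, h0]
      have : k % 2 = 0 ∨ k % 2 = 1 := by omega
      rcases this with h | h <;> simp [h] <;> omega
    · show List.count 1 ((k % 2) :: altS k) = _
      rw [List.count_cons, h1]
      have : k % 2 = 0 ∨ k % 2 = 1 := by omega
      rcases this with h | h <;> simp [h] <;> omega
    · show List.count a ((k % 2) :: altS k) = 0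
      rw [List.count_cons, h2 a ha]
      have : ¬ (k % 2 == a) = true := by simp; omega
      simp [this]

lemma altS_mem {k a : ℕ} (h : a ∈ altS k) : a < 2 := by
  induction k with
  | zero => cases h
  | succ k IH =>
    rcases List.mem_cons.mp h with h | h
    · omega
    · exact IH h

lemma altS_head (k : ℕ) : (altS (k+1)).head? = some (k % 2) := rfl

lemma eqAdj_altS (k : ℕ) : eqAdj (altS k) = 0 := by
  induction k with
  | zero => rfl
  | succ k IH =>
    show eqAdj ((k % 2) :: altS k) = 0
    rw [eqAdj_cons, IH]
    cases k with
    | zero => rfl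
    | succ k' =>
      rw [altS_head k']
      have : ¬ (some (k' % 2) = some ((k'+1) % 2)) := by simp; omega
      simp [this]

lemma eqAdj_replicate (k x : ℕ) : eqAdj (List.replicate k x) = k - 1 := by
  induction k with
  | zero => rfl
  | succ k IH =>
    rw [List.replicate_succ, eqAdj_cons, IH, List.head?_replicate]
    cases k with
    | zero => simp
    | succ k' => simp; omega

lemma grpT_length (n : ℕ) : (grpT n).length = n := by
  unfold grpT; simp; omega

lemma grpT_count (n : ℕ) :
    (grpT n).count 0 = (n+1)/2 ∧ (grpT n).count 1 = n/2 ∧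
    ∀ a, 2 ≤ a → (grpT n).count a = 0 := by
  unfold grpT
  refine ⟨?_, ?_, fun a ha => ?_⟩ <;>
    simp [List.count_append, List.count_replicate] <;> omega

lemma grpT_head {n : ℕ} (hn : 2 ≤ n) : (grpT n).head? = some 0 := by
  unfold grpT
  rw [List.head?_append, List.head?_replicate]
  have : ¬ (n - n/2 = 0) := by omega
  simp [this]

lemma eqAdj_grpT {n : ℕ} (hn : 2 ≤ n) : eqAdj (grpT n) = n - 2 := by
  unfold grpT
  rw [eqAdj_append, eqAdj_replicate, eqAdj_replicate]
  have h1 : jn (List.replicate (n - n/2) 0) (List.replicate (n/2) 1) = 0 := by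
    unfold jn
    rw [List.getLast?_replicate, List.head?_replicate]
    have h2 : ¬ (n - n/2 = 0) := by omega
    have h3 : ¬ (n/2 = 0) := by omega
    simp [h2, h3]
  rw [h1]; omega

lemma grpT_fullyKary {n : ℕ} (hn : 2 ≤ n) : FullyKary 2 (grpT n) := by
  intro a
  unfold grpT
  constructor
  · intro h
    rcases List.mem_append.mp h with h | h <;>
      (rw [List.eq_of_mem_replicate h]; omega)
  · intro h
    interval_cases a
    · exact List.mem_append.mpr (Or.inl (List.mem_replicate.mpr ⟨by omega, rfl⟩))
    · exact List.mem_append.mpr (Or.inr (List.mem_replicate.mpr ⟨by omega, rfl⟩))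

lemma altS_fullyKary {n : ℕ} (hn : 2 ≤ n) : FullyKary 2 (altS n) := by
  intro a
  constructor
  · exact altS_mem
  · intro h
    obtain ⟨h0, h1, _⟩ := altS_count n
    have : 0 < (altS n).count a := by
      interval_cases a
      · rw [h0]; omega
      · rw [h1]; omega
    exact List.count_pos_iff.mp this

lemma witness_compatible {n : ℕ} : Compatible (altS n) (grpT n) := by
  intro a
  obtain ⟨h0, h1, h2⟩ := altS_count n
  obtain ⟨g0, g1, g2⟩ := grpT_count n
  rcases Nat.lt_or_ge a 2 with h | h
  · interval_cases a
    · rw [h0, g0]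
    · rw [h1, g1]
  · rw [h2 a h, g2 a h]

lemma witness_lower {n : ℕ} (hn : 2 ≤ n) :
    ∀ m, ReachIn m (altS n) (grpT n) → n - 1 ≤ m := by
  intro m hr
  obtain ⟨h1, h2⟩ := lower_main (grpT n) m (altS n) (fun a ha => altS_mem ha) hr
  rw [eqAdj_altS, eqAdj_grpT hn] at h1 h2
  by_contra hcon
  have hm : m = n - 2 := by omega
  obtain ⟨k, hk⟩ : ∃ k, n = k + 1 := ⟨n - 1, by omega⟩
  have hhead := h2 (by omega) (k % 2) (by rw [hk]; exact altS_head k)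
  rw [grpT_head hn] at hhead
  have : 0 = (k % 2 + m) % 2 := Option.some_inj.mp hhead
  omega

lemma compat_strip {p q r : List ℕ} (h : Compatible (p ++ r) (q ++ r)) : Compatible p q := by
  intro a
  have := h a
  simp only [List.count_append] at this
  omega

lemma binary_of_compat {s t : List ℕ} (hb : ∀ a ∈ s, a < 2) (hc : Compatible s t) :
    ∀ a ∈ t, a < 2 := by
  intro a ha
  have h1 : 0 < t.count a := List.count_pos_iff.mpr ha
  have h2 : 0 < s.count a := by rw [hc a]; exact h1
  exact hb a (List.count_pos_iff.mp h2)

lemma firstOcc {d : ℕ} : ∀ l : List ℕ, d ∈ l → ∃ u v, l = u ++ d :: v ∧ ∀ x ∈ u, x ≠ d := by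
  intro l
  induction l with
  | nil => intro h; cases h
  | cons a l IH =>
    intro h
    by_cases ha : a = d
    · exact ⟨[], l, by rw [ha]; rfl, by simp⟩
    · have hd : d ∈ l := by
        rcases List.mem_cons.mp h with h | h
        · exact absurd h.symm ha
        · exact h
      obtain ⟨u, v, he, hu⟩ := IH hd
      refine ⟨a :: u, v, by rw [he]; rfl, ?_⟩
      intro x hx
      rcases List.mem_cons.mp hx with h | h
      · rw [h]; exact ha
      · exact hu x h

lemma cnt {c d : ℕ} (hcd : c ≠ d) :
    ∀ l : List ℕ, (∀ u v, l ≠ u ++ d :: d :: v) → (∀ x ∈ l, x = c ∨ x = d) →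
      l.getLast? = some c →
      l.count d ≤ l.count c ∧ (l.head? = some c → l.count d < l.count c) := by
  intro l
  induction l with
  | nil => intro _ _ h; simp at h
  | cons x r IH =>
    intro hnd hmem hlast
    cases r with
    | nil =>
      have hx : x = c := by simpa using hlast
      constructor
      · simp only [List.count_cons, List.count_nil, beq_iff_eq]
        split_ifs <;> omega
      · intro _
        simp only [List.count_cons, List.count_nil, beq_iff_eq]
        split_ifs <;> omega
    | cons y r' =>
      have hlast' : (y :: r').getLast? = some c := by
        rw [List.getLast?_cons_cons] at hlast; exact hlast
      have hnd' : ∀ u v, (y :: r') ≠ u ++ d :: d :: v := by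
        intro u v h
        exact hnd (x :: u) v (by rw [show (x :: u) ++ d :: d :: v = x :: (u ++ d :: d :: v) from rfl, ← h])
      have hmem' : ∀ z ∈ y :: r', z = c ∨ z = d := fun z hz => hmem z (List.mem_cons_of_mem _ hz)
      obtain ⟨ih1, ih2⟩ := IH hnd' hmem' hlast'
      set L := y :: r' with hL
      by_cases hx : x = d
      · have hy : y ≠ d := by
          intro hy
          exact hnd [] r' (by rw [hx, hL, hy]; rfl)
        have hyc : y = c := ((hmem' y (by rw [hL]; simp)).resolve_right hy)
        have hlt := ih2 (by rw [hL]; simp [hyc])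
        constructor
        · simp only [List.count_cons, beq_iff_eq]
          split_ifs <;> omega
        · intro hh
          simp only [List.head?_cons, Option.some_inj] at hh
          omega
      · have hxc : x = c := ((hmem x (by simp)).resolve_right hx)
        constructor
        · simp only [List.count_cons, beq_iff_eq]
          split_ifs <;> omega
        · intro _
          simp only [List.count_cons, beq_iff_eq]
          split_ifs <;> omega

lemma UP : ∀ n s t, s.length = n → t.length = n → (∀ a ∈ s, a < 2) →
    Compatible s t → ∃ m, m ≤ n - 1 ∧ ReachIn m s t := by
  intro n
  induction n using Nat.strong_induction_on with
  | _ n IH =>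
  intro s t hs ht hb hc
  rcases n with _ | n'
  · have hs0 : s = [] := List.eq_nil_of_length_eq_zero hs
    have ht0 : t = [] := List.eq_nil_of_length_eq_zero ht
    exact ⟨0, by omega, by rw [hs0, ht0]; rfl⟩
  have hsne : s ≠ [] := by intro h; rw [h] at hs; simp at hs
  have htne : t ≠ [] := by intro h; rw [h] at ht; simp at ht
  obtain ⟨s', sl, hs'⟩ := (List.eq_nil_or_concat s).resolve_left hsne
  obtain ⟨t', tl, ht'⟩ := (List.eq_nil_or_concat t).resolve_left htne
  rw [List.concat_eq_append] at hs' ht'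
  have hs'len : s'.length = n' := by
    have : s'.length + 1 = n' + 1 := by rw [← hs, hs']; simp
    omega
  have ht'len : t'.length = n' := by
    have : t'.length + 1 = n' + 1 := by rw [← ht, ht']; simp
    omega
  have hbt := binary_of_compat hb hc
  by_cases hlast : sl = tl
  · -- Case 1: last symbols agree
    have hcc : Compatible s' t' := by
      apply compat_strip (r := [sl])
      intro x
      rw [← hs', hc x, ht', hlast]
    obtain ⟨m, hm, hr⟩ := IH n' (by omega) s' t' hs'len ht'len
      (fun a ha => hb a (by rw [hs']; exact List.mem_append_left _ ha)) hcc
    refine ⟨m, by omega, ?_⟩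
    rw [hs', ht', ← hlast]
    exact reach_append [sl] hr
  · -- Case 2
    have h_sl2 : sl < 2 := hb sl (by rw [hs']; simp)
    have h_tl2 : tl < 2 := hbt tl (by rw [ht']; simp)
    obtain ⟨a, s₀, hsa⟩ := List.exists_cons_of_ne_nil hsne
    obtain ⟨b, t₀, htb⟩ := List.exists_cons_of_ne_nil htne
    have ha2 : a < 2 := hb a (by rw [hsa]; simp)
    have hb2 : b < 2 := hbt b (by rw [htb]; simp)
    have hn2 : 1 ≤ n' := by
      by_contra h
      have hn0 : n' = 0 := by omega
      have hs'nil : s' = [] := List.length_eq_zero_iff.mp (by omega)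
      have ht'nil : t' = [] := List.length_eq_zero_iff.mp (by omega)
      have h1 := hc sl
      rw [hs', ht', hs'nil, ht'nil] at h1
      simp [List.count_cons] at h1
      have hne : ¬ (tl = sl) := fun hh => hlast hh.symm
      exact absurd h1 hne
    by_cases h2a : a = tl
    · -- Case 2a : head of s equals last of t; flip all of s first
      have hstep : FlipStep s s.reverse :=
        ⟨s.length, by rw [hs]; omega, le_rfl, (pflip_all s).symm⟩
      have hrev : s.reverse = s₀.reverse ++ [a] := by rw [hsa]; simp
      have hlen0 : s₀.reverse.length = n' := by
        have : s₀.length + 1 = n' + 1 := by rw [← hs, hsa]; simp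
        simp; omega
      have hcomp : Compatible (s₀.reverse ++ [a]) (t' ++ [a]) := by
        intro x
        rw [← hrev]
        have h1 : s.reverse.count x = s.count x := List.count_reverse
        rw [h1, hc x, ht', h2a]
      obtain ⟨m, hm, hr⟩ := IH n' (by omega) s₀.reverse t' hlen0 ht'len
        (fun z hz => hb z (by rw [hsa]; exact List.mem_cons_of_mem _ (List.mem_reverse.mp hz)))
        (compat_strip hcomp)
      refine ⟨1 + m, by omega, ?_⟩
      apply reach_trans (reach_one hstep)
      rw [hrev, ht', ← h2a]
      exact reach_append [a] hr
    · by_cases h2b : b = sl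
      · -- Case 2b : head of t equals last of s; flip all of t last
        have htlen : t.reverse.length = n' + 1 := by simp [ht]
        have hstep : FlipStep t.reverse t := by
          refine ⟨t.length, by rw [ht]; omega, by rw [htlen, ht], ?_⟩
          rw [show t.length = t.reverse.length by simp, pflip_all, List.reverse_reverse]
        have hrev : t.reverse = t₀.reverse ++ [b] := by rw [htb]; simp
        have hlen0 : t₀.reverse.length = n' := by
          have : t₀.length + 1 = n' + 1 := by rw [← ht, htb]; simp
          simp; omega
        have hcomp : Compatible (s' ++ [sl]) (t₀.reverse ++ [sl]) := by
          intro x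
          rw [← hs', ← h2b, ← hrev, List.count_reverse, hc x]
        obtain ⟨m, hm, hr⟩ := IH n' (by omega) s' t₀.reverse hs'len hlen0
          (fun z hz => hb z (by rw [hs']; exact List.mem_append_left _ hz))
          (compat_strip hcomp)
        refine ⟨m + 1, by omega, ?_⟩
        refine reach_trans ?_ (reach_one hstep)
        rw [hs', hrev, ← h2b]
        exact reach_append [b] hr
      · -- Case 2c : s = sl ... sl, t = tl ... tl with sl ≠ tl
        have ha : a = sl := by omega
        have hbb : b = tl := by omega
        have ht'ne : t' ≠ [] := by
          intro h; rw [h] at ht'len; simp at ht'len; omega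
        obtain ⟨t'', y, ht''⟩ := (List.eq_nil_or_concat t').resolve_left ht'ne
        rw [List.concat_eq_append] at ht''
        have hy2 : y < 2 := hbt y (by rw [ht', ht'']; simp)
        have ht''len : t''.length = n' - 1 := by
          have : t''.length + 1 = n' := by rw [← ht'len, ht'']; simp
          omega
        have hdmem : tl ∈ s := by
          have h1 : 0 < t.count tl := List.count_pos_iff.mpr (by rw [ht']; simp)
          have h2 : 0 < s.count tl := by rw [hc tl]; exact h1
          exact List.count_pos_iff.mp h2
        have hslast : s.getLast? = some sl := by rw [hs']; exact List.getLast?_concat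
        have htlast : t.getLast? = some tl := by rw [ht']; exact List.getLast?_concat
        by_cases hy : y = sl
        · -- Case 4a : t ends with [sl, tl]
          obtain ⟨u, v, hsplit, hu⟩ := firstOcc s hdmem
          have hune : u ≠ [] := by
            intro h; rw [h] at hsplit
            rw [hsa] at hsplit
            simp at hsplit
            exact h2a hsplit.1
          have hvne : v ≠ [] := by
            intro h; rw [h] at hsplit
            rw [hsplit] at hslast
            rw [show u ++ [tl] = u ++ [tl] from rfl, List.getLast?_concat] at hslast
            exact hlast (Option.some_inj.mp hslast).symm
          obtain ⟨u₀, e, hu0⟩ := (List.eq_nil_or_concat u).resolve_left hune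
          rw [List.concat_eq_append] at hu0
          have he : e = sl := by
            have h1 : e ∈ u := by rw [hu0]; simp
            have h2 : e ≠ tl := hu e h1
            have h3 : e < 2 := hb e (by rw [hsplit]; exact List.mem_append_left _ h1)
            omega
          have hmv : ReachIn 2 s (v.reverse ++ (u ++ [tl])) := by
            rw [hsplit, show u ++ tl :: v = u ++ [tl] ++ v by simp]
            exact move2 (by simp)
          have hw : v.reverse ++ (u ++ [tl]) = (v.reverse ++ u₀) ++ [sl, tl] := by
            rw [hu0, he]; simp
          have ht2 : t = t'' ++ [sl, tl] := by
            rw [ht', ht'', hy]; simp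
          have hwperm : (v.reverse ++ (u ++ [tl])).Perm s := reach_perm hmv
          have hlenw : (v.reverse ++ u₀).length = n' - 1 := by
            have h1 := hwperm.length_eq
            rw [hw, hs] at h1
            simp at h1 ⊢
            omega
          have hncnt : Compatible ((v.reverse ++ u₀) ++ [sl, tl]) (t'' ++ [sl, tl]) := by
            intro x
            rw [← hw, ← ht2, hwperm.count_eq, hc x]
          have hbin : ∀ z ∈ v.reverse ++ u₀, z < 2 := by
            intro z hz
            apply hb z
            have : z ∈ (v.reverse ++ u₀) ++ [sl, tl] := List.mem_append_left _ hz
            rw [← hw] at this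
            exact hwperm.mem_iff.mp this
          obtain ⟨m, hm, hr⟩ := IH (n' - 1) (by omega) (v.reverse ++ u₀) t'' hlenw ht''len
            hbin (compat_strip hncnt)
          refine ⟨2 + m, ?_, ?_⟩
          · have hlu : 1 ≤ u.length := List.length_pos_iff.mpr hune
            have hlv : 1 ≤ v.length := List.length_pos_iff.mpr hvne
            have : u.length + 1 + v.length = n' + 1 := by
              rw [← hs, hsplit]; simp; omega
            omega
          · apply reach_trans hmv
            rw [hw, ht2]
            exact reach_append _ hr
        · have hyd : y = tl := by omega
          by_cases hDD : ∃ u v, s = u ++ tl :: tl :: v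
          · -- Case 4b : s has adjacent tl,tl and t ends [tl, tl]
            obtain ⟨u, v, hsplit⟩ := hDD
            have hune : u ≠ [] := by
              intro h; rw [h, hsa] at hsplit
              simp at hsplit
              exact h2a hsplit.1
            have hmv : ReachIn 2 s (v.reverse ++ (u ++ [tl, tl])) := by
              rw [hsplit, show u ++ tl :: tl :: v = u ++ [tl, tl] ++ v by simp]
              exact move2 (by simp)
            have hw : v.reverse ++ (u ++ [tl, tl]) = (v.reverse ++ u) ++ [tl, tl] := by simp
            have ht2 : t = t'' ++ [tl, tl] := by rw [ht', ht'', hyd]; simp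
            have hwperm : (v.reverse ++ (u ++ [tl, tl])).Perm s := reach_perm hmv
            have hlenw : (v.reverse ++ u).length = n' - 1 := by
              have h1 := hwperm.length_eq
              rw [hw, hs] at h1
              simp at h1 ⊢
              omega
            have hncnt : Compatible ((v.reverse ++ u) ++ [tl, tl]) (t'' ++ [tl, tl]) := by
              intro x
              rw [← hw, ← ht2, hwperm.count_eq, hc x]
            have hbin : ∀ z ∈ v.reverse ++ u, z < 2 := by
              intro z hz
              apply hb z
              have : z ∈ (v.reverse ++ u) ++ [tl, tl] := List.mem_append_left _ hz
              rw [← hw] at this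
              exact hwperm.mem_iff.mp this
            obtain ⟨m, hm, hr⟩ := IH (n' - 1) (by omega) (v.reverse ++ u) t'' hlenw ht''len
              hbin (compat_strip hncnt)
            refine ⟨2 + m, ?_, ?_⟩
            · have hlu : 1 ≤ u.length := List.length_pos_iff.mpr hune
              have : u.length + 2 + v.length = n' + 1 := by
                rw [← hs, hsplit]; simp; omega
              omega
            · apply reach_trans hmv
              rw [hw, ht2]
              exact reach_append _ hr
          · -- Case 4c
            have hs'ne : s' ≠ [] := by
              intro h; rw [h] at hs'len; simp at hs'len; omega
            obtain ⟨s'', z, hs''⟩ := (List.eq_nil_or_concat s').resolve_left hs'ne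
            rw [List.concat_eq_append] at hs''
            have hz2 : z < 2 := hb z (by rw [hs', hs'']; simp)
            have hs''len : s''.length = n' - 1 := by
              have : s''.length + 1 = n' := by rw [← hs'len, hs'']; simp
              omega
            by_cases hz : z = tl
            · -- Case 4c-i : s ends [tl, sl]; operate on t
              have hclmem : sl ∈ t := by
                have h1 : 0 < s.count sl := List.count_pos_iff.mpr (by rw [hs']; simp)
                have h2 : 0 < t.count sl := by rw [← hc sl]; exact h1
                exact List.count_pos_iff.mp h2
              obtain ⟨u', v', htsplit, hu'⟩ := firstOcc t hclmem
              have hu'ne : u' ≠ [] := by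
                intro h; rw [h, htb] at htsplit
                simp at htsplit
                exact h2b htsplit.1
              have hv'ne : v' ≠ [] := by
                intro h; rw [h] at htsplit
                rw [htsplit, List.getLast?_concat] at htlast
                exact hlast (Option.some_inj.mp htlast)
              obtain ⟨u₀', e', hu0'⟩ := (List.eq_nil_or_concat u').resolve_left hu'ne
              rw [List.concat_eq_append] at hu0'
              have he' : e' = tl := by
                have h1 : e' ∈ u' := by rw [hu0']; simp
                have h2 : e' ≠ sl := hu' e' h1
                have h3 : e' < 2 := hbt e' (by rw [htsplit]; exact List.mem_append_left _ h1)
                omega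
              have hmvt : ReachIn 2 t (v'.reverse ++ (u' ++ [sl])) := by
                rw [htsplit, show u' ++ sl :: v' = u' ++ [sl] ++ v' by simp]
                exact move2 (by simp)
              have hback : ReachIn 2 (v'.reverse ++ (u' ++ [sl])) t := reach_symm hmvt
              have hw : v'.reverse ++ (u' ++ [sl]) = (v'.reverse ++ u₀') ++ [tl, sl] := by
                rw [hu0', he']; simp
              have hs2 : s = s'' ++ [tl, sl] := by rw [hs', hs'', hz]; simp
              have htperm : (v'.reverse ++ (u' ++ [sl])).Perm t := reach_perm hmvt
              have hlenw : (v'.reverse ++ u₀').length = n' - 1 := by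
                have h1 := htperm.length_eq
                rw [hw, ht] at h1
                simp at h1 ⊢
                omega
              have hncnt : Compatible (s'' ++ [tl, sl]) ((v'.reverse ++ u₀') ++ [tl, sl]) := by
                intro x
                rw [← hw, ← hs2, htperm.count_eq, hc x]
              have hbin : ∀ w ∈ s'', w < 2 := by
                intro w hw2
                exact hb w (by rw [hs2]; exact List.mem_append_left _ hw2)
              obtain ⟨m, hm, hr⟩ := IH (n' - 1) (by omega) s'' (v'.reverse ++ u₀')
                hs''len hlenw hbin (compat_strip hncnt)
              refine ⟨m + 2, ?_, ?_⟩
              · have hlu : 1 ≤ u'.length := List.length_pos_iff.mpr hu'ne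
                have hlv : 1 ≤ v'.length := List.length_pos_iff.mpr hv'ne
                have : u'.length + 1 + v'.length = n' + 1 := by
                  rw [← ht, htsplit]; simp; omega
                omega
              · refine reach_trans ?_ hback
                rw [hw, hs2]
                exact reach_append _ hr
            · -- Case 4c-ii : s ends [sl, sl]; t must have adjacent sl,sl
              have hzc : z = sl := by omega
              by_cases hCC : ∃ u v, t = u ++ sl :: sl :: v
              · obtain ⟨u'', v'', htsplit⟩ := hCC
                have hu''ne : u'' ≠ [] := by
                  intro h; rw [h, htb] at htsplit
                  simp at htsplit
                  exact h2b htsplit.1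
                have hmvt : ReachIn 2 t (v''.reverse ++ (u'' ++ [sl, sl])) := by
                  rw [htsplit, show u'' ++ sl :: sl :: v'' = u'' ++ [sl, sl] ++ v'' by simp]
                  exact move2 (by simp)
                have hback : ReachIn 2 (v''.reverse ++ (u'' ++ [sl, sl])) t := reach_symm hmvt
                have hw : v''.reverse ++ (u'' ++ [sl, sl]) = (v''.reverse ++ u'') ++ [sl, sl] := by
                  simp
                have hs2 : s = s'' ++ [sl, sl] := by rw [hs', hs'', hzc]; simp
                have htperm : (v''.reverse ++ (u'' ++ [sl, sl])).Perm t := reach_perm hmvt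
                have hlenw : (v''.reverse ++ u'').length = n' - 1 := by
                  have h1 := htperm.length_eq
                  rw [hw, ht] at h1
                  simp at h1 ⊢
                  omega
                have hncnt : Compatible (s'' ++ [sl, sl]) ((v''.reverse ++ u'') ++ [sl, sl]) := by
                  intro x
                  rw [← hw, ← hs2, htperm.count_eq, hc x]
                have hbin : ∀ w ∈ s'', w < 2 := by
                  intro w hw2
                  exact hb w (by rw [hs2]; exact List.mem_append_left _ hw2)
                obtain ⟨m, hm, hr⟩ := IH (n' - 1) (by omega) s'' (v''.reverse ++ u'')
                  hs''len hlenw hbin (compat_strip hncnt)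
                refine ⟨m + 2, ?_, ?_⟩
                · have hlu : 1 ≤ u''.length := List.length_pos_iff.mpr hu''ne
                  have : u''.length + 2 + v''.length = n' + 1 := by
                    rw [← ht, htsplit]; simp; omega
                  omega
                · refine reach_trans ?_ hback
                  rw [hw, hs2]
                  exact reach_append _ hr
              · -- impossible by counting
                exfalso
                have hshead : s.head? = some sl := by rw [hsa, ha]; rfl
                have hthead : t.head? = some tl := by rw [htb, hbb]; rfl
                have hnos : ∀ u v, s ≠ u ++ tl :: tl :: v := fun u v h => hDD ⟨u, v, h⟩
                have hnot : ∀ u v, t ≠ u ++ sl :: sl :: v := fun u v h => hCC ⟨u, v, h⟩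
                have hmems : ∀ x ∈ s, x = sl ∨ x = tl := by
                  intro x hx
                  have := hb x hx
                  omega
                have hmemt : ∀ x ∈ t, x = tl ∨ x = sl := by
                  intro x hx
                  have := hbt x hx
                  omega
                have hc1 := (cnt hlast s hnos hmems hslast).2 hshead
                have hc2 := (cnt (Ne.symm hlast) t hnot hmemt htlast).2 hthead
                have e1 := hc sl
                have e2 := hc tl
                omega

theorem binary_diameter (n : ℕ) (hn : 2 ≤ n) :
    (∀ s t : List ℕ, s.length = n → t.length = n → FullyKary 2 s → FullyKary 2 t →
      Compatible s t → flipDist s t ≤ n - 1) ∧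
    (∃ s t : List ℕ, s.length = n ∧ t.length = n ∧ FullyKary 2 s ∧ FullyKary 2 t ∧
      Compatible s t ∧ flipDist s t = n - 1) := by
  constructor
  · intro s t hsl htl hks hkt hc
    obtain ⟨m, hm, hr⟩ := UP n s t hsl htl (fun a ha => (hks a).mp ha) hc
    exact le_trans (Nat.sInf_le (show m ∈ {k | ReachIn k s t} from hr)) hm
  · refine ⟨altS n, grpT n, altS_length n, grpT_length n, altS_fullyKary hn,
      grpT_fullyKary hn, witness_compatible, ?_⟩
    obtain ⟨m, hm, hr⟩ := UP n (altS n) (grpT n) (altS_length n) (grpT_length n)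
      (fun a ha => altS_mem ha) witness_compatible
    apply le_antisymm
    · exact le_trans (Nat.sInf_le (show m ∈ {k | ReachIn k (altS n) (grpT n)} from hr)) hm
    · have hne : Set.Nonempty {k | ReachIn k (altS n) (grpT n)} := ⟨m, hr⟩
      exact witness_lower hn _ (Nat.sInf_mem hne)
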